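/- For s defined by s_0 = 1, s_{2n} = Σ_{i=0}^{n-1}(2i+1)s_{2i}s_{2(n-i-1)}, one has s_{2n} = Σ over noncrossing pairings π of [2n] of Π_{V∈π}(ip(V)+1), where ip(V) is the number of points of [2n] lying strictly between the two endpoints of the pair V. -/

import Mathlib

/-- `P` is a partition of `Fin n`. -/
def IsPartitionOf {n : ℕ} (P : Finset (Finset (Fin n))) : Prop :=
  (∀ B ∈ P, B.Nonempty) ∧ ∀ i : Fin n, ∃! B, B ∈ P ∧ i ∈ B

/-- `P` is a pairing of `Fin n`. -/
def IsPairingOf {n : ℕ} (P : Finset (Finset (Fin n))) : Prop :=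
  IsPartitionOf P ∧ ∀ B ∈ P, B.card = 2

/-- A partition is noncrossing if no two distinct blocks cross. -/
def IsNoncrossing {n : ℕ} (P : Finset (Finset (Fin n))) : Prop :=
  ∀ B ∈ P, ∀ C ∈ P, B ≠ C →
    ¬∃ a b c d : Fin n, a < b ∧ b < c ∧ c < d ∧ a ∈ B ∧ c ∈ B ∧ b ∈ C ∧ d ∈ C

/-- The number of inner points of a pair: points lying strictly between its two
endpoints. -/
noncomputable def innerPoints {n : ℕ} (B : Finset (Fin n)) : ℕ :=
  Set.ncard {c : Fin n | ∃ a ∈ B, ∃ b ∈ B, a < c ∧ c < b}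

section AuxNat

open Finset
open scoped Classical

/-- `P` is a partition of `S ⊆ ℕ` into blocks of size two. -/
def PairPart (S : Finset ℕ) (P : Finset (Finset ℕ)) : Prop :=
  (∀ B ∈ P, B.card = 2) ∧ (∀ x ∈ S, ∃! B, B ∈ P ∧ x ∈ B) ∧ (∀ B ∈ P, B ⊆ S)

/-- noncrossing, over ℕ. -/
def NCn (P : Finset (Finset ℕ)) : Prop :=
  ∀ B ∈ P, ∀ C ∈ P, B ≠ C →
    ¬∃ a b c d : ℕ, a < b ∧ b < c ∧ c < d ∧ a ∈ B ∧ c ∈ B ∧ b ∈ C ∧ d ∈ C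

/-- weight of a block: max minus min. -/
noncomputable def wtB (B : Finset ℕ) : ℕ := B.sup id - sInf (↑B : Set ℕ)

/-- weight of a pairing. -/
noncomputable def wt (P : Finset (Finset ℕ)) : ℕ := ∏ B ∈ P, wtB B

/-- the finset of noncrossing pairings of `S`. -/
noncomputable def pairNC (S : Finset ℕ) : Finset (Finset (Finset ℕ)) :=
  S.powerset.powerset.filter fun P => PairPart S P ∧ NCn P

/-- total weight of noncrossing pairings of `S`. -/
noncomputable def NN (S : Finset ℕ) : ℕ := ∑ P ∈ pairNC S, wt P

lemma pair_lt {B : Finset ℕ} (h : B.card = 2) : ∃ a b : ℕ, a < b ∧ B = {a, b} := by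
  obtain ⟨x, y, hxy, rfl⟩ := Finset.card_eq_two.mp h
  rcases lt_or_gt_of_ne hxy with h' | h'
  · exact ⟨x, y, h', rfl⟩
  · exact ⟨y, x, h', Finset.pair_comm x y⟩

lemma wtB_pair {a b : ℕ} (h : a ≤ b) : wtB {a, b} = b - a := by
  have h1 : ({a, b} : Finset ℕ).sup id = b := by
    simp [Finset.sup_insert, h]
  have h2 : sInf ((({a, b} : Finset ℕ) : Set ℕ)) = a := by
    have : (({a, b} : Finset ℕ) : Set ℕ) = {a, b} := by simp
    rw [this, csInf_pair]
    exact min_eq_left h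
  rw [wtB, h1, h2]

lemma mem_pairNC {S : Finset ℕ} {P : Finset (Finset ℕ)} :
    P ∈ pairNC S ↔ PairPart S P ∧ NCn P := by
  unfold pairNC
  rw [Finset.mem_filter]
  constructor
  · rintro ⟨-, h⟩; exact h
  · intro h
    refine ⟨Finset.mem_powerset.mpr fun B hB => Finset.mem_powerset.mpr (h.1.2.2 B hB), h⟩

lemma PairPart.card_eq {S : Finset ℕ} {P : Finset (Finset ℕ)} (h : PairPart S P) :
    S.card = 2 * P.card := by
  have hdisj : ∀ B ∈ P, ∀ C ∈ P, B ≠ C → Disjoint B C := by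
    intro B hB C hC hne
    rw [Finset.disjoint_left]
    intro x hxB hxC
    have hxS := h.2.2 B hB hxB
    obtain ⟨D, -, hu⟩ := h.2.1 x hxS
    exact hne ((hu B ⟨hB, hxB⟩).trans (hu C ⟨hC, hxC⟩).symm)
  have hS : S = P.biUnion (fun B => B) := by
    ext x
    simp only [Finset.mem_biUnion]
    constructor
    · intro hx; obtain ⟨B, ⟨hB, hxB⟩, -⟩ := h.2.1 x hx; exact ⟨B, hB, hxB⟩
    · rintro ⟨B, hB, hxB⟩; exact h.2.2 B hB hxB
  rw [hS, Finset.card_biUnion hdisj]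
  rw [Finset.sum_congr rfl (fun B hB => (h.1 B hB : B.card = 2))]
  simp [mul_comm]

lemma NN_of_odd {S : Finset ℕ} (h : Odd S.card) : NN S = 0 := by
  apply Finset.sum_eq_zero
  intro P hP
  exfalso
  rw [mem_pairNC] at hP
  have h2 := hP.1.card_eq
  rcases h with ⟨c, hc⟩
  omega

lemma NN_empty : NN (∅ : Finset ℕ) = 1 := by
  have hpc : pairNC (∅ : Finset ℕ) = {∅} := by
    ext P
    rw [mem_pairNC, Finset.mem_singleton]
    constructor
    · rintro ⟨⟨hcard, -, hsub⟩, -⟩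
      by_contra hne
      obtain ⟨B, hB⟩ := Finset.nonempty_iff_ne_empty.mpr hne
      have hBe : B = ∅ := Finset.subset_empty.mp (hsub B hB)
      have hc := hcard B hB
      simp [hBe] at hc
    · rintro rfl
      refine ⟨⟨by simp, by simp, by simp⟩, ?_⟩
      intro B hB; simp at hB
  rw [NN, hpc]
  simp [wt]

lemma block_side {a j b : ℕ} {P : Finset (Finset ℕ)} (hP : PairPart (Finset.Ico a b) P)
    (hNC : NCn P) (hj : ({a, j} : Finset ℕ) ∈ P) (haj : a < j) {B : Finset ℕ} (hB : B ∈ P)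
    (hBne : B ≠ {a, j}) : B ⊆ Finset.Ico (a + 1) j ∨ B ⊆ Finset.Ico (j + 1) b := by
  have hsub := hP.2.2 _ hj
  have hjIco : j ∈ Finset.Ico a b := hsub (by simp)
  have hjb : j < b := (Finset.mem_Ico.mp hjIco).2
  obtain ⟨x, y, hxy, hBxy⟩ := pair_lt (hP.1 B hB)
  have hxB : x ∈ B := by rw [hBxy]; simp
  have hyB : y ∈ B := by rw [hBxy]; simp
  have hxI := Finset.mem_Ico.mp (hP.2.2 B hB hxB)
  have hyI := Finset.mem_Ico.mp (hP.2.2 B hB hyB)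
  have huniq : ∀ z, z ∈ B → z ∈ ({a, j} : Finset ℕ) → False := by
    intro z hzB hzaj
    have hzS : z ∈ Finset.Ico a b := hP.2.2 B hB hzB
    obtain ⟨D, -, hu⟩ := hP.2.1 z hzS
    exact hBne ((hu B ⟨hB, hzB⟩).trans (hu _ ⟨hj, hzaj⟩).symm)
  have hxa : x ≠ a := fun h => huniq x hxB (by simp [h])
  have hxj : x ≠ j := fun h => huniq x hxB (by simp [h])
  have hya : y ≠ a := fun h => huniq y hyB (by simp [h])
  have hyj : y ≠ j := fun h => huniq y hyB (by simp [h])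
  rcases lt_or_gt_of_ne hxj with hxltj | hxgtj
  · rcases lt_or_gt_of_ne hyj with hyltj | hygtj
    · left
      rw [hBxy]
      intro z hz
      simp only [Finset.mem_insert, Finset.mem_singleton] at hz
      rcases hz with rfl | rfl <;> rw [Finset.mem_Ico] <;> omega
    · exfalso
      exact hNC _ hj _ hB (fun h => hBne h.symm)
        ⟨a, x, j, y, by omega, by omega, by omega, by simp, by simp, hxB, hyB⟩
  · right
    rw [hBxy]
    intro z hz
    simp only [Finset.mem_insert, Finset.mem_singleton] at hz
    rcases hz with rfl | rfl <;> rw [Finset.mem_Ico] <;> omega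

end AuxNat
section AuxNat2

open Finset
open scoped Classical

lemma fiber {a j b : ℕ} (haj : a < j) (hjb : j < b) :
    ∑ P ∈ (pairNC (Finset.Ico a b)).filter (fun P => ({a, j} : Finset ℕ) ∈ P), wt P
      = (j - a) * NN (Finset.Ico (a + 1) j) * NN (Finset.Ico (j + 1) b) := by
  set I1 := Finset.Ico (a + 1) j with hI1
  set I2 := Finset.Ico (j + 1) b with hI2
  -- rewrite RHS as a sum over pairs
  have hRHS : (j - a) * NN I1 * NN I2
      = ∑ p ∈ (pairNC I1) ×ˢ (pairNC I2), (j - a) * wt p.1 * wt p.2 := by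
    rw [Finset.sum_product, NN, NN, mul_assoc, Finset.sum_mul_sum, Finset.mul_sum]
    refine Finset.sum_congr rfl fun Q hQ => ?_
    rw [Finset.mul_sum]
    refine Finset.sum_congr rfl fun R hR => ?_
    ring
  rw [hRHS]
  -- key structural fact : every pairing in the fiber decomposes
  have key : ∀ P ∈ (pairNC (Finset.Ico a b)).filter (fun P => ({a, j} : Finset ℕ) ∈ P),
      P = insert {a, j} (P.filter (· ⊆ I1) ∪ P.filter (· ⊆ I2)) := by
    intro P hP
    rw [Finset.mem_filter, mem_pairNC] at hP
    obtain ⟨⟨hPart, hNC⟩, hjP⟩ := hP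
    ext B
    constructor
    · intro hB
      by_cases hBe : B = {a, j}
      · rw [hBe]; exact Finset.mem_insert_self _ _
      · rcases block_side hPart hNC hjP haj hB hBe with h | h
        · exact Finset.mem_insert_of_mem (Finset.mem_union_left _ (Finset.mem_filter.mpr ⟨hB, h⟩))
        · exact Finset.mem_insert_of_mem (Finset.mem_union_right _ (Finset.mem_filter.mpr ⟨hB, h⟩))
    · intro hB
      rcases Finset.mem_insert.mp hB with rfl | hB'
      · exact hjP
      · rcases Finset.mem_union.mp hB' with h | h
        · exact (Finset.mem_filter.mp h).1
        · exact (Finset.mem_filter.mp h).1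
  refine Finset.sum_nbij' (fun P => (P.filter (· ⊆ I1), P.filter (· ⊆ I2)))
    (fun p => insert {a, j} (p.1 ∪ p.2)) ?_ ?_ ?_ ?_ ?_
  · -- forward membership
    intro P hP
    have hPdec := key P hP
    rw [Finset.mem_filter, mem_pairNC] at hP
    obtain ⟨⟨hPart, hNC⟩, hjP⟩ := hP
    rw [Finset.mem_product]
    constructor
    · rw [mem_pairNC]
      refine ⟨⟨?_, ?_, ?_⟩, ?_⟩
      · intro B hB; exact hPart.1 B (Finset.mem_filter.mp hB).1
      · intro x hx
        have hx' := Finset.mem_Ico.mp hx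
        have hxS : x ∈ Finset.Ico a b := Finset.mem_Ico.mpr ⟨by omega, by omega⟩
        obtain ⟨B, ⟨hB, hxB⟩, hu⟩ := hPart.2.1 x hxS
        have hBne : B ≠ {a, j} := by
          rintro rfl
          simp only [Finset.mem_insert, Finset.mem_singleton] at hxB
          omega
        have hBI1 : B ⊆ I1 := by
          rcases block_side hPart hNC hjP haj hB hBne with h | h
          · exact h
          · exfalso
            have := Finset.mem_Ico.mp (h hxB)
            omega
        refine ⟨B, ⟨Finset.mem_filter.mpr ⟨hB, hBI1⟩, hxB⟩, ?_⟩
        rintro C ⟨hC, hxC⟩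
        exact hu C ⟨(Finset.mem_filter.mp hC).1, hxC⟩
      · intro B hB; exact (Finset.mem_filter.mp hB).2
      · intro B hB C hC hne
        exact hNC B (Finset.mem_filter.mp hB).1 C (Finset.mem_filter.mp hC).1 hne
    · rw [mem_pairNC]
      refine ⟨⟨?_, ?_, ?_⟩, ?_⟩
      · intro B hB; exact hPart.1 B (Finset.mem_filter.mp hB).1
      · intro x hx
        have hx' := Finset.mem_Ico.mp hx
        have hxS : x ∈ Finset.Ico a b := Finset.mem_Ico.mpr ⟨by omega, by omega⟩
        obtain ⟨B, ⟨hB, hxB⟩, hu⟩ := hPart.2.1 x hxS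
        have hBne : B ≠ {a, j} := by
          rintro rfl
          simp only [Finset.mem_insert, Finset.mem_singleton] at hxB
          omega
        have hBI2 : B ⊆ I2 := by
          rcases block_side hPart hNC hjP haj hB hBne with h | h
          · exfalso
            have := Finset.mem_Ico.mp (h hxB)
            omega
          · exact h
        refine ⟨B, ⟨Finset.mem_filter.mpr ⟨hB, hBI2⟩, hxB⟩, ?_⟩
        rintro C ⟨hC, hxC⟩
        exact hu C ⟨(Finset.mem_filter.mp hC).1, hxC⟩
      · intro B hB; exact (Finset.mem_filter.mp hB).2
      · intro B hB C hC hne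
        exact hNC B (Finset.mem_filter.mp hB).1 C (Finset.mem_filter.mp hC).1 hne
  · -- backward membership
    rintro ⟨Q, R⟩ hp
    rw [Finset.mem_product] at hp
    obtain ⟨hQ, hR⟩ := hp
    rw [mem_pairNC] at hQ hR
    have hQsub : ∀ B ∈ Q, ∀ z ∈ B, a + 1 ≤ z ∧ z < j :=
      fun B hB z hz => Finset.mem_Ico.mp (hQ.1.2.2 B hB hz)
    have hRsub : ∀ B ∈ R, ∀ z ∈ B, j + 1 ≤ z ∧ z < b :=
      fun B hB z hz => Finset.mem_Ico.mp (hR.1.2.2 B hB hz)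
    rw [Finset.mem_filter]
    refine ⟨?_, Finset.mem_insert_self _ _⟩
    rw [mem_pairNC]
    refine ⟨⟨?_, ?_, ?_⟩, ?_⟩
    · -- cards
      intro B hB
      rcases Finset.mem_insert.mp hB with rfl | hB'
      · exact Finset.card_pair (by omega)
      · rcases Finset.mem_union.mp hB' with h | h
        exacts [hQ.1.1 _ h, hR.1.1 _ h]
    · -- partition
      intro x hx
      rw [Finset.mem_Ico] at hx
      have hcase : x = a ∨ x = j ∨ (a + 1 ≤ x ∧ x < j) ∨ (j + 1 ≤ x ∧ x < b) := by omega
      rcases hcase with rfl | rfl | hc | hc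
      · refine ⟨{x, j}, ⟨Finset.mem_insert_self _ _, by simp⟩, ?_⟩
        rintro D ⟨hD, hxD⟩
        rcases Finset.mem_insert.mp hD with rfl | hD'
        · rfl
        · exfalso
          rcases Finset.mem_union.mp hD' with h | h
          · have := hQsub _ h _ hxD; omega
          · have := hRsub _ h _ hxD; omega
      · refine ⟨{a, x}, ⟨Finset.mem_insert_self _ _, by simp⟩, ?_⟩
        rintro D ⟨hD, hxD⟩
        rcases Finset.mem_insert.mp hD with rfl | hD'
        · rfl
        · exfalso
          rcases Finset.mem_union.mp hD' with h | h
          · have := hQsub _ h _ hxD; omega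
          · have := hRsub _ h _ hxD; omega
      · obtain ⟨B, ⟨hB, hxB⟩, hu⟩ := hQ.1.2.1 x (Finset.mem_Ico.mpr hc)
        refine ⟨B, ⟨Finset.mem_insert_of_mem (Finset.mem_union_left _ hB), hxB⟩, ?_⟩
        rintro D ⟨hD, hxD⟩
        rcases Finset.mem_insert.mp hD with rfl | hD'
        · exfalso
          simp only [Finset.mem_insert, Finset.mem_singleton] at hxD
          omega
        · rcases Finset.mem_union.mp hD' with h | h
          · exact hu D ⟨h, hxD⟩
          · exfalso; have := hRsub _ h _ hxD; omega
      · obtain ⟨B, ⟨hB, hxB⟩, hu⟩ := hR.1.2.1 x (Finset.mem_Ico.mpr hc)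
        refine ⟨B, ⟨Finset.mem_insert_of_mem (Finset.mem_union_right _ hB), hxB⟩, ?_⟩
        rintro D ⟨hD, hxD⟩
        rcases Finset.mem_insert.mp hD with rfl | hD'
        · exfalso
          simp only [Finset.mem_insert, Finset.mem_singleton] at hxD
          omega
        · rcases Finset.mem_union.mp hD' with h | h
          · exfalso; have := hQsub _ h _ hxD; omega
          · exact hu D ⟨h, hxD⟩
    · -- subsets
      intro B hB
      rcases Finset.mem_insert.mp hB with rfl | hB'
      · intro z hz
        simp only [Finset.mem_insert, Finset.mem_singleton] at hz
        rcases hz with rfl | rfl <;> rw [Finset.mem_Ico] <;> omega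
      · rcases Finset.mem_union.mp hB' with h | h
        · intro z hz; have := hQsub _ h _ hz; rw [Finset.mem_Ico]; omega
        · intro z hz; have := hRsub _ h _ hz; rw [Finset.mem_Ico]; omega
    · -- noncrossing
      rintro B hB C hC hne ⟨p, q, r, t, hpq, hqr, hrt, hpB, hrB, hqC, htC⟩
      rcases Finset.mem_insert.mp hB with rfl | hB' <;>
        rcases Finset.mem_insert.mp hC with hCe | hC'
      · exact absurd hCe.symm hne
      · simp only [Finset.mem_insert, Finset.mem_singleton] at hpB hrB
        rcases Finset.mem_union.mp hC' with h | h
        · have h1 := hQsub _ h _ hqC; have h2 := hQsub _ h _ htC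
          rcases hpB with rfl | rfl <;> rcases hrB with rfl | rfl <;> omega
        · have h1 := hRsub _ h _ hqC; have h2 := hRsub _ h _ htC
          rcases hpB with rfl | rfl <;> rcases hrB with rfl | rfl <;> omega
      · rw [hCe] at hqC htC
        simp only [Finset.mem_insert, Finset.mem_singleton] at hqC htC
        rcases Finset.mem_union.mp hB' with h | h
        · have h1 := hQsub _ h _ hpB; have h2 := hQsub _ h _ hrB
          rcases hqC with rfl | rfl <;> rcases htC with rfl | rfl <;> omega
        · have h1 := hRsub _ h _ hpB; have h2 := hRsub _ h _ hrB
          rcases hqC with rfl | rfl <;> rcases htC with rfl | rfl <;> omega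
      · rcases Finset.mem_union.mp hB' with h | h <;> rcases Finset.mem_union.mp hC' with h' | h'
        · exact hQ.2 B h C h' hne ⟨p, q, r, t, hpq, hqr, hrt, hpB, hrB, hqC, htC⟩
        · have h1 := hRsub _ h' _ hqC; have h2 := hQsub _ h _ hrB; omega
        · have h1 := hRsub _ h _ hpB; have h2 := hQsub _ h' _ hqC; omega
        · exact hR.2 B h C h' hne ⟨p, q, r, t, hpq, hqr, hrt, hpB, hrB, hqC, htC⟩
  · -- left inverse
    intro P hP
    exact (key P hP).symm
  · -- right inverse
    rintro ⟨Q, R⟩ hp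
    rw [Finset.mem_product] at hp
    obtain ⟨hQ, hR⟩ := hp
    rw [mem_pairNC] at hQ hR
    have hQsub : ∀ B ∈ Q, B ⊆ I1 := hQ.1.2.2
    have hRsub : ∀ B ∈ R, B ⊆ I2 := hR.1.2.2
    have hQne : ∀ B ∈ Q, B.Nonempty := fun B hB =>
      Finset.card_pos.mp (by rw [hQ.1.1 B hB]; norm_num)
    have hRne : ∀ B ∈ R, B.Nonempty := fun B hB =>
      Finset.card_pos.mp (by rw [hR.1.1 B hB]; norm_num)
    have hc1 : (insert {a, j} (Q ∪ R)).filter (· ⊆ I1) = Q := by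
      ext B
      simp only [Finset.mem_filter, Finset.mem_insert, Finset.mem_union]
      constructor
      · rintro ⟨rfl | hB | hB, hsub⟩
        · exfalso
          have := Finset.mem_Ico.mp (hsub (Finset.mem_insert_self a _))
          omega
        · exact hB
        · exfalso
          obtain ⟨z, hz⟩ := hRne B hB
          have h1 := Finset.mem_Ico.mp (hRsub B hB hz)
          have h2 := Finset.mem_Ico.mp (hsub hz)
          omega
      · intro hB
        exact ⟨Or.inr (Or.inl hB), hQsub B hB⟩
    have hc2 : (insert {a, j} (Q ∪ R)).filter (· ⊆ I2) = R := by
      ext B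
      simp only [Finset.mem_filter, Finset.mem_insert, Finset.mem_union]
      constructor
      · rintro ⟨rfl | hB | hB, hsub⟩
        · exfalso
          have := Finset.mem_Ico.mp (hsub (Finset.mem_insert_self a _))
          omega
        · exfalso
          obtain ⟨z, hz⟩ := hQne B hB
          have h1 := Finset.mem_Ico.mp (hQsub B hB hz)
          have h2 := Finset.mem_Ico.mp (hsub hz)
          omega
        · exact hB
      · intro hB
        exact ⟨Or.inr (Or.inr hB), hRsub B hB⟩
    dsimp only
    rw [hc1, hc2]
  · -- weights
    intro P hP
    have hPdec := key P hP
    rw [Finset.mem_filter, mem_pairNC] at hP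
    obtain ⟨⟨hPart, hNC⟩, hjP⟩ := hP
    set Q := P.filter (· ⊆ I1) with hQdef
    set R := P.filter (· ⊆ I2) with hRdef
    have hnm : ({a, j} : Finset ℕ) ∉ Q ∪ R := by
      intro h
      rcases Finset.mem_union.mp h with h' | h'
      · have := Finset.mem_Ico.mp ((Finset.mem_filter.mp h').2 (Finset.mem_insert_self a _))
        omega
      · have := Finset.mem_Ico.mp ((Finset.mem_filter.mp h').2 (Finset.mem_insert_self a _))
        omega
    have hdisj : Disjoint Q R := by
      rw [Finset.disjoint_left]
      intro B hBQ hBR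
      obtain ⟨z, hz⟩ := Finset.card_pos.mp
        (by rw [hPart.1 B (Finset.mem_filter.mp hBQ).1]; norm_num : 0 < B.card)
      have h1 := Finset.mem_Ico.mp ((Finset.mem_filter.mp hBQ).2 hz)
      have h2 := Finset.mem_Ico.mp ((Finset.mem_filter.mp hBR).2 hz)
      omega
    calc wt P = wt (insert {a, j} (Q ∪ R)) := by rw [← hPdec]
      _ = wtB {a, j} * (wt Q * wt R) := by
          rw [wt, Finset.prod_insert hnm, Finset.prod_union hdisj]; rfl
      _ = (j - a) * wt Q * wt R := by
          rw [wtB_pair (le_of_lt haj)]; ring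

end AuxNat2
section AuxNat3

open Finset
open scoped Classical

lemma NN_rec (a k : ℕ) :
    NN (Finset.Ico a (a + 2 * k + 2)) =
      ∑ i ∈ Finset.range (k + 1),
        (2 * i + 1) * NN (Finset.Ico (a + 1) (a + 2 * i + 1))
          * NN (Finset.Ico (a + 2 * i + 2) (a + 2 * k + 2)) := by
  set b := a + 2 * k + 2 with hb
  have hab : a < b := by omega
  have hstep : ∀ P ∈ pairNC (Finset.Ico a b),
      ∃! j, j ∈ Finset.Ioo a b ∧ ({a, j} : Finset ℕ) ∈ P := by
    intro P hP
    rw [mem_pairNC] at hP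
    have haS : a ∈ Finset.Ico a b := Finset.mem_Ico.mpr ⟨le_refl a, hab⟩
    obtain ⟨B, ⟨hB, haB⟩, hu⟩ := hP.1.2.1 a haS
    obtain ⟨x, y, hxy, rfl⟩ := pair_lt (hP.1.1 B hB)
    have hmem : a = x ∨ a = y := by simpa using haB
    rcases hmem with rfl | rfl
    · refine ⟨y, ⟨?_, hB⟩, ?_⟩
      · have hyI := Finset.mem_Ico.mp (hP.1.2.2 _ hB (by simp : y ∈ ({a, y} : Finset ℕ)))
        exact Finset.mem_Ioo.mpr ⟨hxy, hyI.2⟩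
      · rintro j' ⟨hj'I, hj'P⟩
        have heq := hu _ ⟨hj'P, by simp⟩
        have : j' ∈ ({a, y} : Finset ℕ) := by rw [← heq]; simp
        simp only [Finset.mem_insert, Finset.mem_singleton] at this
        rw [Finset.mem_Ioo] at hj'I
        rcases this with rfl | rfl
        · omega
        · rfl
    · exfalso
      have hxI := Finset.mem_Ico.mp (hP.1.2.2 _ hB (by simp : x ∈ ({x, a} : Finset ℕ)))
      omega
  calc NN (Finset.Ico a b)
      = ∑ P ∈ pairNC (Finset.Ico a b), ∑ j ∈ Finset.Ioo a b,
          if ({a, j} : Finset ℕ) ∈ P then wt P else 0 := by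
        rw [NN]
        refine Finset.sum_congr rfl fun P hP => ?_
        obtain ⟨j₀, ⟨hj₀I, hj₀P⟩, hu⟩ := hstep P hP
        have hco : ∀ j' ∈ Finset.Ioo a b,
            (if ({a, j'} : Finset ℕ) ∈ P then wt P else 0)
              = (if j' = j₀ then wt P else 0) := by
          intro j' hj'
          by_cases h : ({a, j'} : Finset ℕ) ∈ P
          · rw [if_pos h, if_pos (hu j' ⟨hj', h⟩)]
          · rw [if_neg h, if_neg]
            rintro rfl
            exact h hj₀P
        rw [Finset.sum_congr rfl hco, Finset.sum_ite_eq' _ j₀, if_pos hj₀I]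
    _ = ∑ j ∈ Finset.Ioo a b,
          ∑ P ∈ (pairNC (Finset.Ico a b)).filter (fun P => ({a, j} : Finset ℕ) ∈ P), wt P := by
        rw [Finset.sum_comm]
        exact Finset.sum_congr rfl fun j hj => (Finset.sum_filter _ _).symm
    _ = ∑ j ∈ Finset.Ioo a b,
          (j - a) * NN (Finset.Ico (a + 1) j) * NN (Finset.Ico (j + 1) b) := by
        refine Finset.sum_congr rfl fun j hj => ?_
        rw [Finset.mem_Ioo] at hj
        exact fiber hj.1 hj.2
    _ = ∑ j ∈ (Finset.range (k + 1)).image (fun i => a + 2 * i + 1),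
          (j - a) * NN (Finset.Ico (a + 1) j) * NN (Finset.Ico (j + 1) b) := by
        symm
        apply Finset.sum_subset
        · intro j hj
          simp only [Finset.mem_image, Finset.mem_range] at hj
          obtain ⟨i, hi, rfl⟩ := hj
          rw [Finset.mem_Ioo]
          omega
        · intro j hjI hjE
          simp only [Finset.mem_image, Finset.mem_range, not_exists] at hjE
          rw [Finset.mem_Ioo] at hjI
          have hodd : Odd ((Finset.Ico (a + 1) j).card) := by
            rw [Nat.card_Ico]
            rcases Nat.even_or_odd (j - (a + 1)) with he | ho
            · exfalso
              obtain ⟨c, hc⟩ := he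
              have hck : c < k + 1 := by omega
              exact hjE c ⟨hck, by omega⟩
            · exact ho
          rw [NN_of_odd hodd]
          ring
    _ = ∑ i ∈ Finset.range (k + 1),
          (2 * i + 1) * NN (Finset.Ico (a + 1) (a + 2 * i + 1))
            * NN (Finset.Ico (a + 2 * i + 2) (a + 2 * k + 2)) := by
        rw [Finset.sum_image (by intro i hi i' hi' h; simp only at h; omega)]
        refine Finset.sum_congr rfl fun i hi => ?_
        rw [show a + 2 * i + 1 - a = 2 * i + 1 from by omega,
          show a + 2 * i + 1 + 1 = a + 2 * i + 2 from by omega]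

lemma NN_eq (s : ℕ → ℕ) (h0 : s 0 = 1)
    (hrec : ∀ n : ℕ, 1 ≤ n →
      s (2 * n) = ∑ i ∈ Finset.range n, (2 * i + 1) * s (2 * i) * s (2 * (n - i - 1))) :
    ∀ m a : ℕ, NN (Finset.Ico a (a + 2 * m)) = s (2 * m) := by
  intro m
  induction m using Nat.strong_induction_on with
  | _ m ih =>
    intro a
    match m with
    | 0 => simp [NN_empty, h0]
    | Nat.succ k =>
      rw [show a + 2 * (k + 1) = a + 2 * k + 2 from by ring, NN_rec, hrec (k + 1) (by omega)]
      refine Finset.sum_congr rfl fun i hi => ?_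
      rw [Finset.mem_range] at hi
      have e1 : NN (Finset.Ico (a + 1) (a + 2 * i + 1)) = s (2 * i) := by
        rw [show a + 2 * i + 1 = (a + 1) + 2 * i from by ring]
        exact ih i (by omega) (a + 1)
      have e2 : NN (Finset.Ico (a + 2 * i + 2) (a + 2 * k + 2)) = s (2 * (k - i)) := by
        rw [show a + 2 * k + 2 = (a + 2 * i + 2) + 2 * (k - i) from by omega]
        exact ih (k - i) (by omega) _
      rw [e1, e2, show k + 1 - i - 1 = k - i from by omega]

end AuxNat3
section Bridge

open Finset
open scoped Classical

lemma pair_lt_fin {n : ℕ} {B : Finset (Fin n)} (h : B.card = 2) :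
    ∃ x y : Fin n, x < y ∧ B = {x, y} := by
  obtain ⟨x, y, hxy, rfl⟩ := Finset.card_eq_two.mp h
  rcases lt_or_gt_of_ne hxy with h' | h'
  · exact ⟨x, y, h', rfl⟩
  · exact ⟨y, x, h', Finset.pair_comm x y⟩

lemma innerPoints_pair {n : ℕ} {x y : Fin n} (hxy : x < y) :
    innerPoints ({x, y} : Finset (Fin n)) + 1 = (y : ℕ) - (x : ℕ) := by
  have hxyv : (x : ℕ) < (y : ℕ) := hxy
  have hset : {c : Fin n | ∃ a ∈ ({x, y} : Finset (Fin n)), ∃ b ∈ ({x, y} : Finset (Fin n)),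
      a < c ∧ c < b} = Set.Ioo x y := by
    ext c
    simp only [Set.mem_setOf_eq, Set.mem_Ioo, Finset.mem_insert, Finset.mem_singleton]
    constructor
    · rintro ⟨a', ha', b', hb', h1, h2⟩
      rw [Fin.lt_def] at h1 h2
      constructor <;> rw [Fin.lt_def] <;>
        rcases ha' with rfl | rfl <;> rcases hb' with rfl | rfl <;> omega
    · rintro ⟨h1, h2⟩
      exact ⟨x, Or.inl rfl, y, Or.inr rfl, h1, h2⟩
  rw [innerPoints, hset, ← Finset.coe_Ioo, Set.ncard_coe_finset, Fin.card_Ioo]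
  omega

/-- For `s` with `s_0 = 1`, `s_{2n} = Σ_{i=0}^{n-1} (2i+1) s_{2i} s_{2(n-i-1)}`, one has
`s_{2n} = Σ_{π noncrossing pairing of [2n]} Π_{V ∈ π} (ip(V)+1)`. -/
theorem s_eq_sum_noncrossing_pairings_inner_points (s : ℕ → ℕ) (h0 : s 0 = 1)
    (hrec : ∀ n : ℕ, 1 ≤ n →
      s (2 * n) = ∑ i ∈ Finset.range n, (2 * i + 1) * s (2 * i) * s (2 * (n - i - 1))) :
    ∀ n : ℕ,
      s (2 * n) = ∑ᶠ P ∈ {P : Finset (Finset (Fin (2 * n))) |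
          IsPairingOf P ∧ IsNoncrossing P},
        ∏ B ∈ P, (innerPoints B + 1) := by
  intro n
  have hset : {P : Finset (Finset (Fin (2 * n))) | IsPairingOf P ∧ IsNoncrossing P}
      = ↑(Finset.univ.filter
          fun P : Finset (Finset (Fin (2 * n))) => IsPairingOf P ∧ IsNoncrossing P) := by
    ext P; simp
  rw [hset, finsum_mem_coe_finset]
  have hN := NN_eq s h0 hrec n 0
  rw [zero_add] at hN
  rw [← hN, NN]
  symm
  have hval : ∀ B : Finset (Fin (2 * n)),
      (Finset.univ.filter (fun y : Fin (2 * n) => (y : ℕ) ∈ B.image Fin.val)) = B := by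
    intro B
    ext y
    simp only [Finset.mem_filter, Finset.mem_univ, true_and, Finset.mem_image]
    constructor
    · rintro ⟨z, hz, hzy⟩
      exact Fin.val_injective hzy ▸ hz
    · intro hy; exact ⟨y, hy, rfl⟩
  have hval2 : ∀ B : Finset ℕ, B ⊆ Finset.Ico 0 (2 * n) →
      (Finset.univ.filter (fun y : Fin (2 * n) => (y : ℕ) ∈ B)).image Fin.val = B := by
    intro B hB
    ext x
    simp only [Finset.mem_image, Finset.mem_filter, Finset.mem_univ, true_and]
    constructor
    · rintro ⟨y, hy, rfl⟩; exact hy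
    · intro hx
      have hx2 : x < 2 * n := (Finset.mem_Ico.mp (hB hx)).2
      exact ⟨⟨x, hx2⟩, hx, rfl⟩
  refine Finset.sum_nbij' (fun P => P.image (fun B => B.image Fin.val))
    (fun P' => P'.image (fun B => Finset.univ.filter (fun y : Fin (2 * n) => (y : ℕ) ∈ B)))
    ?_ ?_ ?_ ?_ ?_
  · -- forward membership
    intro P hP
    rw [Finset.mem_filter] at hP
    obtain ⟨-, ⟨⟨hne, hpart⟩, hcard⟩, hNCr⟩ := hP
    rw [mem_pairNC]
    refine ⟨⟨?_, ?_, ?_⟩, ?_⟩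
    · intro B' hB'
      obtain ⟨B, hB, rfl⟩ := Finset.mem_image.mp hB'
      rw [Finset.card_image_of_injective _ Fin.val_injective]
      exact hcard B hB
    · intro x hx
      rw [Finset.mem_Ico] at hx
      obtain ⟨B, ⟨hB, hyB⟩, hu⟩ := hpart ⟨x, hx.2⟩
      refine ⟨B.image Fin.val, ⟨Finset.mem_image_of_mem _ hB,
        Finset.mem_image_of_mem _ hyB⟩, ?_⟩
      rintro C' ⟨hC', hxC'⟩
      obtain ⟨C, hC, rfl⟩ := Finset.mem_image.mp hC'
      obtain ⟨z, hz, hzx⟩ := Finset.mem_image.mp hxC'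
      have hzy : z = (⟨x, hx.2⟩ : Fin (2 * n)) := Fin.val_injective hzx
      rw [hu C ⟨hC, hzy ▸ hz⟩]
    · intro B' hB'
      obtain ⟨B, hB, rfl⟩ := Finset.mem_image.mp hB'
      intro x hx
      obtain ⟨z, hz, rfl⟩ := Finset.mem_image.mp hx
      rw [Finset.mem_Ico]
      exact ⟨Nat.zero_le _, z.isLt⟩
    · rintro B' hB' C' hC' hne' ⟨p, q, r, t, h1, h2, h3, hp, hr, hq, ht⟩
      obtain ⟨B, hB, rfl⟩ := Finset.mem_image.mp hB'
      obtain ⟨C, hC, rfl⟩ := Finset.mem_image.mp hC'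
      have hBC : B ≠ C := fun h => hne' (by rw [h])
      obtain ⟨p₀, hp₀, rfl⟩ := Finset.mem_image.mp hp
      obtain ⟨r₀, hr₀, rfl⟩ := Finset.mem_image.mp hr
      obtain ⟨q₀, hq₀, rfl⟩ := Finset.mem_image.mp hq
      obtain ⟨t₀, ht₀, rfl⟩ := Finset.mem_image.mp ht
      exact hNCr B hB C hC hBC ⟨p₀, q₀, r₀, t₀, Fin.lt_def.mpr h1, Fin.lt_def.mpr h2,
        Fin.lt_def.mpr h3, hp₀, hr₀, hq₀, ht₀⟩
  · -- backward membership
    intro P' hP'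
    rw [mem_pairNC] at hP'
    obtain ⟨hPart, hNCn⟩ := hP'
    rw [Finset.mem_filter]
    refine ⟨Finset.mem_univ _, ⟨⟨?_, ?_⟩, ?_⟩, ?_⟩
    · intro D hD
      obtain ⟨B, hB, rfl⟩ := Finset.mem_image.mp hD
      obtain ⟨z, hz⟩ := Finset.card_pos.mp (by rw [hPart.1 B hB]; norm_num : 0 < B.card)
      have hz2 : z < 2 * n := (Finset.mem_Ico.mp (hPart.2.2 B hB hz)).2
      exact ⟨⟨z, hz2⟩, Finset.mem_filter.mpr ⟨Finset.mem_univ _, hz⟩⟩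
    · intro y
      have hyI : (y : ℕ) ∈ Finset.Ico 0 (2 * n) := Finset.mem_Ico.mpr ⟨Nat.zero_le _, y.isLt⟩
      obtain ⟨B, ⟨hB, hyB⟩, hu⟩ := hPart.2.1 (y : ℕ) hyI
      refine ⟨Finset.univ.filter (fun z : Fin (2 * n) => (z : ℕ) ∈ B),
        ⟨Finset.mem_image_of_mem _ hB, Finset.mem_filter.mpr ⟨Finset.mem_univ _, hyB⟩⟩, ?_⟩
      rintro D ⟨hD, hyD⟩
      obtain ⟨C, hC, rfl⟩ := Finset.mem_image.mp hD
      rw [hu C ⟨hC, (Finset.mem_filter.mp hyD).2⟩]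
    · intro D hD
      obtain ⟨B, hB, rfl⟩ := Finset.mem_image.mp hD
      have himg := hval2 B (hPart.2.2 B hB)
      calc (Finset.univ.filter (fun z : Fin (2 * n) => (z : ℕ) ∈ B)).card
          = ((Finset.univ.filter (fun z : Fin (2 * n) => (z : ℕ) ∈ B)).image Fin.val).card :=
            (Finset.card_image_of_injective _ Fin.val_injective).symm
        _ = B.card := by rw [himg]
        _ = 2 := hPart.1 B hB
    · rintro D hD E hE hne' ⟨p, q, r, t, h1, h2, h3, hp, hr, hq, ht⟩
      obtain ⟨B, hB, rfl⟩ := Finset.mem_image.mp hD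
      obtain ⟨C, hC, rfl⟩ := Finset.mem_image.mp hE
      have hBC : B ≠ C := fun h => hne' (by rw [h])
      exact hNCn B hB C hC hBC ⟨↑p, ↑q, ↑r, ↑t, Fin.lt_def.mp h1, Fin.lt_def.mp h2,
        Fin.lt_def.mp h3, (Finset.mem_filter.mp hp).2, (Finset.mem_filter.mp hr).2,
        (Finset.mem_filter.mp hq).2, (Finset.mem_filter.mp ht).2⟩
  · -- left inverse
    intro P hP
    rw [Finset.image_image]
    have heq : Set.EqOn ((fun B : Finset ℕ =>
        Finset.univ.filter (fun y : Fin (2 * n) => (y : ℕ) ∈ B)) ∘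
          (fun B : Finset (Fin (2 * n)) => B.image Fin.val)) id ↑P :=
      fun B _ => hval B
    rw [Finset.image_congr heq, Finset.image_id]
  · -- right inverse
    intro P' hP'
    rw [mem_pairNC] at hP'
    rw [Finset.image_image]
    have heq : Set.EqOn ((fun B : Finset (Fin (2 * n)) => B.image Fin.val) ∘
        (fun B : Finset ℕ => Finset.univ.filter (fun y : Fin (2 * n) => (y : ℕ) ∈ B))) id
          ↑P' :=
      fun B hB => hval2 B (hP'.1.2.2 B (Finset.mem_coe.mp hB))
    rw [Finset.image_congr heq, Finset.image_id]
  · -- values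
    intro P hP
    rw [Finset.mem_filter] at hP
    obtain ⟨-, ⟨-, hcard⟩, -⟩ := hP
    rw [wt, Finset.prod_image
      (fun x _ y _ h => Finset.image_injective Fin.val_injective h)]
    refine Finset.prod_congr rfl fun B hB => ?_
    obtain ⟨x, y, hxy, rfl⟩ := pair_lt_fin (hcard B hB)
    rw [Finset.image_insert, Finset.image_singleton, wtB_pair (le_of_lt (Fin.lt_def.mp hxy))]
    exact innerPoints_pair hxy

end Bridge
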